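/- There is a universal constant C > 0 such that for every connected Abelian Cayley graph G = Cay(Γ, S) with |Γ| = n and generating multiset S of size d, the multiplicity of λ_2 as an eigenvalue of the normalized Laplacian of G is at most 2^{C·d}. -/

import Mathlib

open Matrix

/-- Normalized adjacency matrix of the Abelian Cayley graph `Cay(Γ, S)`. -/
noncomputable def cayleyAdj {Γ : Type*} [AddCommGroup Γ] [Fintype Γ] [DecidableEq Γ]
    (S : Multiset Γ) : Matrix Γ Γ ℝ :=
  Matrix.of fun x y => (S.count (y - x) : ℝ) / (Multiset.card S : ℝ)

/-- Normalized Laplacian `L = I - A` of the Abelian Cayley graph `Cay(Γ, S)`. -/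
noncomputable def cayleyLap {Γ : Type*} [AddCommGroup Γ] [Fintype Γ] [DecidableEq Γ]
    (S : Multiset Γ) : Matrix Γ Γ ℝ :=
  1 - cayleyAdj S

/-- Sorted (nondecreasing) list of eigenvalues of a matrix, with multiplicity. -/
noncomputable def eigList {Γ : Type*} [Fintype Γ] [DecidableEq Γ] (M : Matrix Γ Γ ℝ) : List ℝ :=
  Multiset.sort M.charpoly.roots (· ≤ ·)

/-- The `i`-th smallest eigenvalue (0-indexed, with multiplicity); `eig M 1 = λ₂`. -/
noncomputable def eig {Γ : Type*} [Fintype Γ] [DecidableEq Γ] (M : Matrix Γ Γ ℝ) (i : ℕ) : ℝ :=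
  (eigList M).getD i 0

/-- The multiplicity of `μ` as an eigenvalue of `M` (as a root of the characteristic
polynomial, with multiplicity). -/
noncomputable def eigMult {Γ : Type*} [Fintype Γ] [DecidableEq Γ]
    (M : Matrix Γ Γ ℝ) (μ : ℝ) : ℕ :=
  Multiset.count μ M.charpoly.roots


set_option linter.unusedSectionVars false

section Aux

section Packing
open Metric MeasureTheory
lemma packing_lemma {ι : Type} [Fintype ι] (c : EuclideanSpace ℝ ι) (r : ℝ) (hr : 0 < r)
    (T : Finset (EuclideanSpace ℝ ι)) (hball : ∀ p ∈ T, dist p c ≤ r)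
    (hsep : ∀ p ∈ T, ∀ q ∈ T, p ≠ q → r ≤ dist p q) :
    (T.card : ℝ) ≤ 3 ^ (Fintype.card ι) := by
  set m := Fintype.card ι
  set B := volume (ball (0 : EuclideanSpace ℝ ι) 1) with hB
  have hBpos : 0 < B := measure_ball_pos _ _ one_pos
  have hBlt : B < ⊤ := measure_ball_lt_top
  have hdisj : (T : Set (EuclideanSpace ℝ ι)).PairwiseDisjoint
      (fun p => ball p (r / 2)) := by
    intro p hp q hq hpq
    exact ball_disjoint_ball (by linarith [hsep p hp q hq hpq])
  have hsub : (⋃ p ∈ T, ball p (r / 2)) ⊆ ball c (3 * r / 2) := by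
    intro x hx
    simp only [Set.mem_iUnion] at hx
    obtain ⟨p, hp, hxp⟩ := hx
    have := hball p hp
    have : dist x c < 3 * r / 2 := by
      calc dist x c ≤ dist x p + dist p c := dist_triangle _ _ _
        _ < r / 2 + r := by have := mem_ball.1 hxp; linarith [hball p hp]
        _ ≤ 3 * r / 2 := by linarith
    exact mem_ball.2 this
  have hmeas : volume (⋃ p ∈ T, ball p (r / 2))
      = ∑ p ∈ T, volume (ball p (r / 2)) :=
    measure_biUnion_finset hdisj (fun p _ => measurableSet_ball)
  have hballvol : ∀ p : EuclideanSpace ℝ ι,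
      volume (ball p (r/2)) = ENNReal.ofReal ((r/2) ^ m) * B := by
    intro p
    rw [Measure.addHaar_ball_of_pos volume p (by linarith)]
    simp [finrank_euclideanSpace, hB, m]
  have hbig : volume (ball c (3*r/2)) = ENNReal.ofReal ((3*r/2) ^ m) * B := by
    rw [Measure.addHaar_ball_of_pos volume c (by linarith)]
    simp [finrank_euclideanSpace, hB, m]
  have key : (T.card : ENNReal) * (ENNReal.ofReal ((r/2) ^ m) * B)
      ≤ ENNReal.ofReal ((3*r/2) ^ m) * B := by
    calc (T.card : ENNReal) * (ENNReal.ofReal ((r/2) ^ m) * B)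
        = ∑ p ∈ T, volume (ball p (r/2)) := by
          rw [Finset.sum_congr rfl (fun p _ => hballvol p), Finset.sum_const, nsmul_eq_mul]
      _ = volume (⋃ p ∈ T, ball p (r / 2)) := hmeas.symm
      _ ≤ volume (ball c (3*r/2)) := measure_mono hsub
      _ = _ := hbig
  have key2 : (T.card : ENNReal) * ENNReal.ofReal ((r/2) ^ m)
      ≤ ENNReal.ofReal ((3*r/2) ^ m) := by
    rw [← mul_assoc] at key
    exact (ENNReal.mul_le_mul_iff_left hBpos.ne' hBlt.ne).mp key
  have hx : (0:ℝ) < (r/2) ^ m := by positivity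
  have key3 : (T.card : ℝ) * ((r/2) ^ m) ≤ (3*r/2) ^ m := by
    have := key2
    rw [← ENNReal.ofReal_natCast T.card, ← ENNReal.ofReal_mul (by positivity)] at this
    exact (ENNReal.ofReal_le_ofReal_iff (by positivity)).mp this
  have h3 : ((3:ℝ)*r/2) ^ m = 3 ^ m * (r/2) ^ m := by
    rw [← mul_pow]; ring_nf
  rw [h3] at key3
  calc (T.card : ℝ) = (T.card : ℝ) * ((r/2)^m) / ((r/2)^m) := by field_simp
    _ ≤ 3 ^ m * (r/2)^m / ((r/2)^m) := by gcongr
    _ = 3 ^ m := by field_simp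

end Packing

lemma second_lt {R : Multiset ℝ} {a b μ : ℝ} (h : ({a, b} : Multiset ℝ) ≤ R)
    (ha : a < μ) (hb : b < μ) : (Multiset.sort R (· ≤ ·)).getD 1 0 < μ := by
  set l := Multiset.sort R (· ≤ ·) with hl
  have hsort : l.Pairwise (· ≤ ·) := Multiset.pairwise_sort _ _
  have hcount : 2 ≤ Multiset.countP (fun x => x < μ) R := by
    have hle := Multiset.countP_le_of_le (fun x => x < μ) h
    have h2 : Multiset.countP (fun x => x < μ) ({a, b} : Multiset ℝ) = 2 := by
      rw [Multiset.insert_eq_cons, Multiset.countP_cons,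
        show ({b} : Multiset ℝ) = b ::ₘ 0 from rfl, Multiset.countP_cons]
      simp [ha, hb]
    omega
  have hcl : 2 ≤ l.countP (fun x => decide (x < μ)) := by
    have hrl : (l : Multiset ℝ) = R := Multiset.sort_eq _ _
    rw [← hrl] at hcount
    simpa using hcount
  match l, hsort, hcl with
  | [], _, hcl => simp at hcl
  | [x], _, hcl =>
    rw [List.countP_cons, List.countP_nil] at hcl
    split at hcl <;> omega
  | x :: y :: t, hsort, hcl =>
    show (x :: y :: t : List ℝ).getD 1 0 < μ
    by_contra hy
    push_neg at hy
    simp only [List.getD_cons_succ, List.getD_cons_zero] at hy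
    have hyt : ∀ z ∈ y :: t, ¬ (z < μ) := by
      intro z hz
      rcases List.mem_cons.1 hz with rfl | hz
      · exact not_lt.2 hy
      · have := (List.pairwise_cons.1 (List.pairwise_cons.1 hsort).2).1 z hz
        exact not_lt.2 (le_trans hy this)
    have h0 : (y :: t).countP (fun x => decide (x < μ)) = 0 := by
      rw [List.countP_eq_zero]
      intro z hz; simpa using hyt z hz
    rw [List.countP_cons, h0] at hcl
    split at hcl <;> omega



variable {Γ : Type} [AddCommGroup Γ] [Fintype Γ] [DecidableEq Γ]

/-- sum of χ over S -/
noncomputable def Tsum (S : Multiset Γ) (χ : AddChar Γ ℂ) : ℂ := (S.map ⇑χ).sum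

lemma sum_count_mul (S : Multiset Γ) (χ : AddChar Γ ℂ) :
    ∑ z : Γ, (S.count z : ℂ) * χ z = Tsum S χ := by
  rw [Tsum, Finset.sum_multiset_map_count]
  rw [← Finset.sum_subset (Finset.subset_univ S.toFinset)]
  · exact Finset.sum_congr rfl fun z _ => by rw [nsmul_eq_mul]
  · intro x _ hx
    simp [Multiset.count_eq_zero_of_notMem (fun h => hx (Multiset.mem_toFinset.2 h))]

lemma eigen_eq (S : Multiset Γ) (hS : S ≠ 0) (χ : AddChar Γ ℂ) :
    ((cayleyLap S).map (algebraMap ℝ ℂ)) *ᵥ ⇑χ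
      = (1 - Tsum S χ / (Multiset.card S : ℂ)) • ⇑χ := by
  have hd : (Multiset.card S : ℂ) ≠ 0 := by
    exact_mod_cast fun h => hS (Multiset.card_eq_zero.1 (by exact_mod_cast h))
  funext x
  have hx : ∀ y : Γ, ((cayleyLap S).map (algebraMap ℝ ℂ)) x y
      = (if x = y then 1 else 0) - (S.count (y - x) : ℂ) / (Multiset.card S : ℂ) := by
    intro y
    simp [cayleyLap, cayleyAdj, Matrix.map_apply, Matrix.one_apply, apply_ite]
  rw [mulVec]
  simp only [dotProduct, hx, sub_mul, ite_mul, one_mul, zero_mul]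
  rw [Finset.sum_sub_distrib, Finset.sum_ite_eq _ x (fun y => ⇑χ y)]
  have hsum : ∑ y : Γ, (S.count (y - x) : ℂ) / (Multiset.card S : ℂ) * χ y
      = Tsum S χ / (Multiset.card S : ℂ) * χ x := by
    rw [← Equiv.sum_comp (Equiv.addLeft x) (fun y => (S.count (y - x) : ℂ) / _ * χ y)]
    simp only [Equiv.coe_addLeft, add_sub_cancel_left]
    have : ∀ z : Γ, (S.count z : ℂ) / (Multiset.card S : ℂ) * χ (x + z)
        = χ x * ((S.count z : ℂ) * χ z) / (Multiset.card S : ℂ) := by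
      intro z
      rw [AddChar.map_add_eq_mul]
      ring
    rw [Finset.sum_congr rfl fun z _ => this z, ← Finset.sum_div, ← Finset.mul_sum,
      sum_count_mul]
    ring
  rw [hsum]
  simp only [Pi.smul_apply, smul_eq_mul, Finset.mem_univ, if_true]
  ring

noncomputable def lam (S : Multiset Γ) (χ : AddChar Γ ℂ) : ℝ :=
  1 - ((S.map (fun s => (χ s).re)).sum) / (Multiset.card S : ℝ)

lemma map_neg_self (S : Multiset Γ) (hsym : ∀ x : Γ, S.count (-x) = S.count x) :
    S.map (fun s => -s) = S := by
  ext x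
  have h1 : Multiset.count x (Multiset.map (fun s => -s) S) = Multiset.count (-x) S := by
    have := Multiset.count_map_eq_count' (fun s : Γ => -s) S neg_injective (-x)
    rwa [neg_neg] at this
  rw [h1, hsym]

lemma tsum_real (S : Multiset Γ) (hsym : ∀ x : Γ, S.count (-x) = S.count x)
    (χ : AddChar Γ ℂ) : Tsum S χ = ((Tsum S χ).re : ℂ) := by
  rw [eq_comm, ← Complex.conj_eq_iff_re]
  rw [Tsum, map_multiset_sum (starRingEnd ℂ), Multiset.map_map]
  have h2 : Multiset.map (⇑(starRingEnd ℂ) ∘ ⇑χ) S = Multiset.map (⇑χ ∘ (fun s => -s)) S :=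
    Multiset.map_congr rfl (fun s _ => by
      simp only [Function.comp_apply]
      exact (AddChar.map_neg_eq_conj χ s).symm)
  rw [h2, ← Multiset.map_map]
  rw [map_neg_self S hsym]

lemma lam_cast (S : Multiset Γ) (hsym : ∀ x : Γ, S.count (-x) = S.count x)
    (χ : AddChar Γ ℂ) :
    1 - Tsum S χ / (Multiset.card S : ℂ) = ((lam S χ : ℝ) : ℂ) := by
  rw [tsum_real S hsym χ, lam]
  have hre : (Tsum S χ).re = (S.map (fun s => (χ s).re)).sum := by
    have := map_multiset_sum Complex.reAddGroupHom (S.map ⇑χ)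
    rw [Tsum]
    simp only [Complex.coe_reAddGroupHom] at this
    rw [show (Multiset.map (⇑χ) S).sum.re = Complex.re (Multiset.map (⇑χ) S).sum from rfl, this,
      Multiset.map_map]
    rfl
  push_cast [hre]
  ring

open Polynomial in
lemma charpoly_roots_cayley (S : Multiset Γ) (hS : S ≠ 0)
    (hsym : ∀ x : Γ, S.count (-x) = S.count x) :
    (cayleyLap S).charpoly.roots = Finset.univ.val.map (lam S) := by
  classical
  set Mc := (cayleyLap S).map (algebraMap ℝ ℂ) with hMc
  set c : AddChar Γ ℂ → ℂ := fun χ => ((lam S χ : ℝ) : ℂ) with hc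
  have hdiag : LinearMap.toMatrix (AddChar.complexBasis Γ) (AddChar.complexBasis Γ)
      (Matrix.toLin' Mc) = Matrix.diagonal c := by
    ext χ' χ
    rw [LinearMap.toMatrix_apply]
    have hb : (AddChar.complexBasis Γ) χ = ⇑χ := AddChar.complexBasis_apply χ
    have : Matrix.toLin' Mc ((AddChar.complexBasis Γ) χ) = c χ • (AddChar.complexBasis Γ) χ := by
      rw [hb, Matrix.toLin'_apply]
      rw [show Mc *ᵥ ⇑χ = (1 - Tsum S χ / (Multiset.card S : ℂ)) • ⇑χ from eigen_eq S hS χ,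
        lam_cast S hsym χ]
    rw [this, _root_.map_smul, Module.Basis.repr_self]
    rw [Matrix.diagonal_apply]
    by_cases h : χ' = χ
    · subst h; simp
    · simp [Finsupp.single_apply, h, Ne.symm h]
  have hcp : Mc.charpoly = (Matrix.diagonal c).charpoly := by
    calc Mc.charpoly = (LinearMap.toMatrix' (Matrix.toLin' Mc)).charpoly := by
          rw [LinearMap.toMatrix'_toLin']
      _ = (Matrix.toLin' Mc).charpoly := by
          rw [← LinearMap.toMatrix_eq_toMatrix', LinearMap.charpoly_toMatrix]
      _ = (Matrix.diagonal c).charpoly := by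
          rw [← hdiag, LinearMap.charpoly_toMatrix]
  have hdiagcp : (Matrix.diagonal c).charpoly = ∏ χ : AddChar Γ ℂ, (X - C (c χ)) := by
    rw [Matrix.charpoly]
    have : charmatrix (Matrix.diagonal c) = Matrix.diagonal (fun χ => X - C (c χ)) := by
      ext i j
      by_cases h : i = j
      · subst h; simp [charmatrix_apply, Matrix.diagonal_apply]
      · simp [charmatrix_apply, Matrix.diagonal_apply, h]
    rw [this, Matrix.det_diagonal]
  set P : Polynomial ℝ := ((Finset.univ.val.map (lam S)).map (fun r => X - C r)).prod with hP
  have hmapP : P.map (algebraMap ℝ ℂ) = Mc.charpoly := by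
    rw [hcp, hdiagcp, hP, Polynomial.map_multiset_prod, Multiset.map_map, Multiset.map_map,
      Finset.prod_eq_multiset_prod]
    congr 1
    apply Multiset.map_congr rfl
    intro χ _
    simp [Polynomial.map_sub, hc]
  have hPeq : (cayleyLap S).charpoly = P := by
    apply Polynomial.map_injective (algebraMap ℝ ℂ)
      (fun a b hab => by exact_mod_cast hab)
    rw [hmapP, hMc, ← Matrix.charpoly_map]
  rw [hPeq, hP, roots_multiset_prod_X_sub_C]

/-- embedding of characters into Euclidean space -/
noncomputable def uEmb (S : Multiset Γ) (χ : AddChar Γ ℂ) :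
    EuclideanSpace ℝ ({x // x ∈ S.toFinset} × Fin 2) :=
  WithLp.toLp 2 fun p => Real.sqrt (S.count p.1.1) * (if p.2 = 0 then (χ p.1.1).re else (χ p.1.1).im)

lemma point_identity (z w : ℂ) (hz : ‖z‖ = 1) (hw : ‖w‖ = 1) :
    (z.re - w.re) ^ 2 + (z.im - w.im) ^ 2 = 2 * (1 - (z * (starRingEnd ℂ) w).re) := by
  have hz2 : z.re ^ 2 + z.im ^ 2 = 1 := by
    have := Complex.sq_norm z
    rw [hz, Complex.normSq_apply] at this
    nlinarith [this]
  have hw2 : w.re ^ 2 + w.im ^ 2 = 1 := by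
    have := Complex.sq_norm w
    rw [hw, Complex.normSq_apply] at this
    nlinarith [this]
  simp only [Complex.mul_re, Complex.conj_re, Complex.conj_im]
  nlinarith

lemma dist_sq_eq (S : Multiset Γ) (hS : S ≠ 0) (χ ψ : AddChar Γ ℂ) :
    dist (uEmb S χ) (uEmb S ψ) ^ 2
      = 2 * (Multiset.card S : ℝ) * lam S (χ * ψ⁻¹) := by
  have hd : ((Multiset.card S : ℝ)) ≠ 0 := by
    exact_mod_cast fun h => hS (Multiset.card_eq_zero.1 (by exact_mod_cast h))
  rw [EuclideanSpace.dist_eq, Real.sq_sqrt (by positivity)]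
  have hdist : ∀ p, dist (uEmb S χ p) (uEmb S ψ p) ^ 2 = (uEmb S χ p - uEmb S ψ p) ^ 2 :=
    fun p => by rw [Real.dist_eq, sq_abs]
  rw [Finset.sum_congr rfl fun p _ => hdist p]
  have hterm : ∀ s : Γ, ∀ j : Fin 2,
      (Real.sqrt (S.count s) * (if j = 0 then (χ s).re else (χ s).im)
        - Real.sqrt (S.count s) * (if j = 0 then (ψ s).re else (ψ s).im)) ^ 2
      = (S.count s : ℝ) * ((if j = 0 then (χ s).re - (ψ s).re else (χ s).im - (ψ s).im)) ^ 2 := by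
    intro s j
    rw [← mul_sub]
    rw [mul_pow, Real.sq_sqrt (by positivity)]
    congr 1
    split <;> ring
  calc ∑ p : {x // x ∈ S.toFinset} × Fin 2,
        (uEmb S χ p - uEmb S ψ p) ^ 2
      = ∑ s : {x // x ∈ S.toFinset}, ∑ j : Fin 2,
        (S.count s.1 : ℝ) * ((if j = 0 then (χ s.1).re - (ψ s.1).re
          else (χ s.1).im - (ψ s.1).im)) ^ 2 := by
        rw [Fintype.sum_prod_type]
        exact Finset.sum_congr rfl fun s _ => Finset.sum_congr rfl fun j _ => hterm s.1 j
    _ = ∑ s : {x // x ∈ S.toFinset},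
        (S.count s.1 : ℝ) * (2 * (1 - ((χ * ψ⁻¹) s.1).re)) := by
        refine Finset.sum_congr rfl fun s _ => ?_
        rw [Fin.sum_univ_two]
        simp only [Fin.isValue, if_true, if_neg (by decide : (1 : Fin 2) ≠ 0)]
        rw [← mul_add, point_identity (χ s.1) (ψ s.1) (AddChar.norm_apply _ _)
          (AddChar.norm_apply _ _)]
        congr 3
        rw [AddChar.mul_apply, AddChar.inv_apply, AddChar.map_neg_eq_conj]
    _ = ∑ s ∈ S.toFinset, (S.count s : ℝ) * (2 * (1 - ((χ * ψ⁻¹) s).re)) := by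
        exact Finset.sum_coe_sort S.toFinset
          (fun s => (S.count s : ℝ) * (2 * (1 - ((χ * ψ⁻¹) s).re)))
    _ = (S.map (fun s => 2 * (1 - ((χ * ψ⁻¹) s).re))).sum := by
        rw [Finset.sum_multiset_map_count]
        exact Finset.sum_congr rfl fun s _ => by rw [nsmul_eq_mul]
    _ = 2 * (Multiset.card S : ℝ) * lam S (χ * ψ⁻¹) := by
        rw [lam]
        have h1 : (S.map (fun s => 2 * (1 - ((χ * ψ⁻¹) s).re))).sum
            = 2 * ((Multiset.card S : ℝ) - (S.map (fun s => ((χ * ψ⁻¹) s).re)).sum) := by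
          rw [mul_sub]
          have h2 : (S.map (fun s => 2 * (1 - ((χ * ψ⁻¹) s).re))).sum
              = (S.map (fun _ => (2:ℝ))).sum - (S.map (fun s => 2 * ((χ * ψ⁻¹) s).re)).sum := by
            rw [← Multiset.sum_map_sub]
            exact congrArg _ (Multiset.map_congr rfl fun s _ => by ring)
          rw [h2, Multiset.map_const', Multiset.sum_replicate, Multiset.sum_map_mul_left]
          push_cast
          ring_nf
        rw [h1]
        field_simp

lemma lam_one (S : Multiset Γ) (hS : S ≠ 0) : lam S (1 : AddChar Γ ℂ) = 0 := by
  have hd : ((Multiset.card S : ℝ)) ≠ 0 := by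
    exact_mod_cast fun h => hS (Multiset.card_eq_zero.1 (by exact_mod_cast h))
  rw [lam]
  have : S.map (fun s => ((1 : AddChar Γ ℂ) s).re) = S.map (fun _ => (1:ℝ)) :=
    Multiset.map_congr rfl fun s _ => by simp
  rw [this, Multiset.map_const', Multiset.sum_replicate, nsmul_eq_mul, mul_one]
  field_simp
  norm_num


open Metric in
theorem lambda2_test {Γ : Type} (S : Multiset Γ) [AddCommGroup Γ] [Fintype Γ] [DecidableEq Γ]
    (hS : S ≠ 0) (hsym : ∀ x : Γ, S.count (-x) = S.count x)
    (hpos : 0 < (Multiset.sort (cayleyLap S).charpoly.roots (· ≤ ·)).getD 1 0) :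
    ((Multiset.count ((Multiset.sort (cayleyLap S).charpoly.roots (· ≤ ·)).getD 1 0)
      (cayleyLap S).charpoly.roots : ℕ) : ℝ)
      ≤ (2 : ℝ) ^ ((4:ℝ) * (Multiset.card S : ℝ)) := by
  classical
  set dn := Multiset.card S with hdn
  have hd : ((dn : ℝ)) ≠ 0 := by
    exact_mod_cast fun h => hS (Multiset.card_eq_zero.1 (by exact_mod_cast h))
  have hd0 : (0:ℝ) < dn := by
    have := Nat.pos_of_ne_zero (fun h => hS (Multiset.card_eq_zero.1 h))
    exact_mod_cast this
  set μ := (Multiset.sort (cayleyLap S).charpoly.roots (· ≤ ·)).getD 1 0 with hμdef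
  have hroots := charpoly_roots_cayley S hS hsym
  -- minimality of μ among nontrivial characters
  have hmin : ∀ φ : AddChar Γ ℂ, φ ≠ 1 → μ ≤ lam S φ := by
    intro φ hφ
    by_contra hlt
    push_neg at hlt
    have h1 : lam S (1 : AddChar Γ ℂ) = 0 := lam_one S hS
    have hsub : ({lam S 1, lam S φ} : Multiset ℝ) ≤ (cayleyLap S).charpoly.roots := by
      rw [hroots]
      have hset : ({1, φ} : Finset (AddChar Γ ℂ)).val ≤ Finset.univ.val :=
        Finset.val_le_iff.2 (Finset.subset_univ _)
      have hval : Multiset.map (lam S) ({1, φ} : Finset (AddChar Γ ℂ)).val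
          = ({lam S 1, lam S φ} : Multiset ℝ) := by
        have h1φ : (1 : AddChar Γ ℂ) ∉ ({φ} : Finset (AddChar Γ ℂ)) := by
          simp [eq_comm, hφ]
        rw [show ({1, φ} : Finset (AddChar Γ ℂ)) = insert 1 {φ} from rfl,
          Finset.insert_val_of_notMem h1φ]
        simp
      exact hval ▸ Multiset.map_le_map hset
    have := second_lt hsub (h1 ▸ hpos) hlt
    exact lt_irrefl μ this
  -- the minimizer set
  set T : Finset (AddChar Γ ℂ) := Finset.univ.filter (fun χ => lam S χ = μ) with hT
  have hmult : Multiset.count μ (cayleyLap S).charpoly.roots = T.card := by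
    rw [hroots, Multiset.count_map]
    have hfc : Multiset.filter (fun a => μ = lam S a) Finset.univ.val
        = Multiset.filter (fun a => lam S a = μ) Finset.univ.val :=
      Multiset.filter_congr (fun a _ => ⟨Eq.symm, Eq.symm⟩)
    rw [hfc, hT, ← Finset.filter_val]
    rfl
  have hT1 : ∀ χ ∈ T, χ ≠ (1 : AddChar Γ ℂ) := by
    intro χ hχ h1
    rw [hT, Finset.mem_filter] at hχ
    rw [h1, lam_one S hS] at hχ
    rw [← hχ.2] at hpos
    exact lt_irrefl _ hpos
  set r := Real.sqrt (2 * (dn:ℝ) * μ) with hr0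
  have hrpos : 0 < r := Real.sqrt_pos.2 (by positivity)
  -- distances
  have hball : ∀ χ ∈ T, dist (uEmb S χ) (uEmb S (1 : AddChar Γ ℂ)) ≤ r := by
    intro χ hχ
    rw [hT, Finset.mem_filter] at hχ
    have := dist_sq_eq S hS χ (1 : AddChar Γ ℂ)
    rw [inv_one, mul_one, hχ.2] at this
    have hd2 : dist (uEmb S χ) (uEmb S (1 : AddChar Γ ℂ)) = r := by
      rw [hr0, ← this, Real.sqrt_sq dist_nonneg]
    exact le_of_eq hd2
  have hsep : ∀ χ ∈ T, ∀ ψ ∈ T, χ ≠ ψ → r ≤ dist (uEmb S χ) (uEmb S ψ) := by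
    intro χ hχ ψ hψ hne
    have hδ : χ * ψ⁻¹ ≠ (1 : AddChar Γ ℂ) := fun h => hne (mul_inv_eq_one.1 h)
    have hge := hmin _ hδ
    have hsq := dist_sq_eq S hS χ ψ
    have : r ^ 2 ≤ dist (uEmb S χ) (uEmb S ψ) ^ 2 := by
      rw [hsq, hr0, Real.sq_sqrt (by positivity)]
      have : 2 * (dn:ℝ) * μ ≤ 2 * (dn:ℝ) * lam S (χ * ψ⁻¹) := by
        apply mul_le_mul_of_nonneg_left hge (by positivity)
      exact this
    nlinarith [dist_nonneg (x := uEmb S χ) (y := uEmb S ψ), hrpos]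
  -- injectivity on T
  have hinj : Set.InjOn (uEmb S) T := by
    intro χ hχ ψ hψ h
    by_contra hne
    have := hsep χ hχ ψ hψ hne
    rw [h, dist_self] at this
    linarith
  -- packing
  have hpack := packing_lemma (uEmb S (1 : AddChar Γ ℂ)) r hrpos (T.image (uEmb S))
    (by
      intro p hp
      obtain ⟨χ, hχ, rfl⟩ := Finset.mem_image.1 hp
      exact hball χ hχ)
    (by
      intro p hp q hq hpq
      obtain ⟨χ, hχ, rfl⟩ := Finset.mem_image.1 hp
      obtain ⟨ψ, hψ, rfl⟩ := Finset.mem_image.1 hq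
      exact hsep χ hχ ψ hψ (fun h => hpq (by rw [h])))
  rw [Finset.card_image_of_injOn hinj] at hpack
  -- count dimensions
  set k := S.toFinset.card with hk
  have hkd : k ≤ dn := S.toFinset_card_le
  have hcard : Fintype.card ({x // x ∈ S.toFinset} × Fin 2) = 2 * k := by
    rw [Fintype.card_prod, Fintype.card_coe, Fintype.card_fin, hk, Nat.mul_comm]
  rw [hmult]
  have h3 : ((3:ℝ)) ^ (Fintype.card ({x // x ∈ S.toFinset} × Fin 2)) ≤ (2:ℝ) ^ (4 * dn) := by
    rw [hcard]
    calc ((3:ℝ)) ^ (2 * k) ≤ (3:ℝ) ^ (2 * dn) := by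
          apply pow_le_pow_right₀ (by norm_num)
          omega
      _ = ((3:ℝ)^2) ^ dn := by rw [← pow_mul]
      _ ≤ ((2:ℝ)^4) ^ dn := by
          apply pow_le_pow_left₀ (by norm_num) (by norm_num)
      _ = (2:ℝ) ^ (4 * dn) := by rw [← pow_mul]
  have hrpow : (2:ℝ) ^ ((4:ℝ) * (dn : ℝ)) = (2:ℝ) ^ (4 * dn) := by
    rw [show ((4:ℝ) * (dn:ℝ)) = ((4 * dn : ℕ) : ℝ) by push_cast; ring, Real.rpow_natCast]
  rw [hrpow]
  exact le_trans (le_trans hpack h3) (le_refl _)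

end Aux

/-- There is a universal constant `C > 0` such that for every connected
Abelian Cayley graph `Cay(Γ, S)` with symmetric generating multiset `S` of size `d`,
the multiplicity of `λ₂` as an eigenvalue of the normalized Laplacian is at most `2^(C·d)`. -/
theorem lambda2_multiplicity_le_exp_degree :
    ∃ C : ℝ, 0 < C ∧
      ∀ (Γ : Type) (_ : AddCommGroup Γ) (_ : Fintype Γ) (_ : DecidableEq Γ)
        (S : Multiset Γ),
        S ≠ 0 →
        (∀ x : Γ, S.count (-x) = S.count x) →
        0 < eig (cayleyLap S) 1 →
        (eigMult (cayleyLap S) (eig (cayleyLap S) 1) : ℝ)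
          ≤ (2 : ℝ) ^ (C * (Multiset.card S : ℝ)) := by
  refine ⟨4, by norm_num, ?_⟩
  intro Γ ag ft de S hS hsym hpos
  exact @lambda2_test Γ S ag ft de hS hsym hpos
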